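/- arXiv:2301.07409 — 2 statements merged into one kernel-verified Lean document; each statement's English description precedes it below -/
import Mathlib

section
/- For α > 0 and pairs (n,m), (n',m') ∈ ℤ², the 2D basis functions V_{nm}^α(r,θ) = R_n^α(r) A_m(θ) with harmonic radial part R_n^α(r) = √(α r^{α-2}/(2π)) exp(i 2nπ r^α) and angular part A_m(θ) = exp(imθ) are orthonormal on the unit disk in polar coordinates with weight r: ∫₀^{2π} ∫₀¹ V_{nm}^α(r,θ) conj(V_{n'm'}^α(r,θ)) r dr dθ = δ_{nn'} δ_{mm'}. -/
open MeasureTheory Real Complex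

/-- 2D basis function `V_{nm}^α(r,θ) = R_n^α(r) A_m(θ)` with harmonic radial part. -/
noncomputable def basisV (α : ℝ) (n m : ℤ) (r θ : ℝ) : ℂ :=
  ((Real.sqrt (α * r ^ (α - 2) / (2 * Real.pi)) : ℂ) *
      Complex.exp (Complex.I * 2 * n * Real.pi * (r ^ α : ℝ))) *
    Complex.exp (Complex.I * m * θ)

open intervalIntegral Set in
/-- Angular orthogonality. -/
lemma basisV_angular_aux (k : ℤ) :
    ∫ θ in (0:ℝ)..(2 * Real.pi), Complex.exp (Complex.I * k * θ)
      = if k = 0 then (2*Real.pi:ℂ) else 0 := by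
  rcases eq_or_ne k 0 with hk | hk
  · simp [hk]
  · rw [if_neg hk]
    have hc : (Complex.I * k) ≠ 0 := by
      simp [Complex.I_ne_zero, Complex.ext_iff]
      exact_mod_cast hk
    rw [integral_exp_mul_complex hc]
    rw [show Complex.I * (k:ℂ) * ((2*Real.pi : ℝ):ℂ) = (k:ℂ) * (2*(Real.pi:ℂ)*Complex.I) by
      push_cast; ring]
    simp [Complex.exp_int_mul_two_pi_mul_I]

open intervalIntegral Set in
/-- Radial orthogonality. -/
lemma basisV_radial_aux (α : ℝ) (hα : 0 < α) (k : ℤ) :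
    ∫ r in (0:ℝ)..1, ((α * r ^ (α-2) / (2*Real.pi) : ℝ) : ℂ)
        * Complex.exp (Complex.I * 2 * k * Real.pi * ((r ^ α : ℝ):ℂ)) * r
      = (if k = 0 then 1 else 0) / (2*Real.pi) := by
  set g : ℝ → ℂ := fun u => Complex.exp (Complex.I * 2 * k * Real.pi * (u:ℂ)) / (2*Real.pi) with hg
  have hgc : Continuous g := by
    apply Continuous.div_const
    exact Complex.continuous_exp.comp (by continuity)
  have hfc : Continuous (fun x : ℝ => x ^ α) :=
    continuous_id.rpow_const (fun x => Or.inr hα.le)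
  have step1 : ∫ r in (0:ℝ)..1, ((α * r ^ (α-2) / (2*Real.pi) : ℝ) : ℂ)
        * Complex.exp (Complex.I * 2 * k * Real.pi * ((r ^ α : ℝ):ℂ)) * r
      = ∫ x in (0:ℝ)..1, (α * x ^ (α-1)) • (g ∘ (fun x : ℝ => x ^ α)) x := by
    apply intervalIntegral.integral_congr_ae
    filter_upwards with x hx
    rw [Set.uIoc_of_le (by norm_num : (0:ℝ) ≤ 1)] at hx
    have hx0 : 0 < x := hx.1
    have hpow : x ^ (α-1) = x ^ (α-2) * x := by
      rw [show α - 1 = (α-2) + 1 by ring, Real.rpow_add hx0, Real.rpow_one]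
    simp only [Function.comp, hg, Complex.real_smul, hpow]
    push_cast
    ring
  have hderiv : ∀ x ∈ Ioo (min (0:ℝ) 1) (max (0:ℝ) 1),
      HasDerivWithinAt (fun x : ℝ => x ^ α) (α * x ^ (α-1)) (Ioi x) x := by
    intro x hx
    rw [min_eq_left (by norm_num : (0:ℝ) ≤ 1)] at hx
    exact (Real.hasDerivAt_rpow_const (Or.inl hx.1.ne')).hasDerivWithinAt
  have hg1 : IntegrableOn g ((fun x : ℝ => x ^ α) '' (Set.uIcc (0:ℝ) 1)) :=
    hgc.continuousOn.integrableOn_compact (isCompact_uIcc.image hfc)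
  have hg2 : IntegrableOn (fun x => (α * x ^ (α-1)) • (g ∘ (fun x : ℝ => x ^ α)) x)
      (Set.uIcc (0:ℝ) 1) := by
    rw [Set.uIcc_of_le (by norm_num : (0:ℝ) ≤ 1)]
    have hint : IntegrableOn (fun x : ℝ => ((α * x ^ (α-1) : ℝ) : ℂ)) (Icc (0:ℝ) 1) := by
      have : IntervalIntegrable (fun x : ℝ => α * x ^ (α-1)) volume 0 1 :=
        (intervalIntegrable_rpow' (by linarith)).const_mul α
      rw [intervalIntegrable_iff_integrableOn_Icc_of_le (by norm_num : (0:ℝ) ≤ 1)] at this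
      exact this.ofReal
    have := hint.bdd_mul (c := 1 / (2*Real.pi)) ((hgc.comp hfc).aestronglyMeasurable.restrict)
      (Filter.Eventually.of_forall fun x => by
        simp only [Function.comp, hg, norm_div]
        rw [show ‖Complex.exp (Complex.I * 2 * k * Real.pi * ((x^α : ℝ):ℂ))‖
            = Real.exp ((Complex.I * 2 * k * Real.pi * ((x^α : ℝ):ℂ)).re) from Complex.norm_exp _]
        simp [Real.pi_nonneg, Complex.norm_real, _root_.abs_of_nonneg Real.pi_nonneg])
    apply this.congr
    filter_upwards with x
    simp [Function.comp, Complex.real_smul, mul_comm]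
  rw [step1, integral_comp_smul_deriv''' (hfc.continuousOn) hderiv
    (hgc.continuousOn.mono (Set.subset_univ _)) hg1 hg2,
    Real.zero_rpow hα.ne', Real.one_rpow]
  rcases eq_or_ne k 0 with hk | hk
  · simp [hk, hg, intervalIntegral.integral_div]
  · rw [if_neg hk, hg]
    have hc : (Complex.I * 2 * k * Real.pi) ≠ 0 := by
      simp [Complex.I_ne_zero, Complex.ext_iff, Real.pi_ne_zero]
      exact_mod_cast hk
    rw [intervalIntegral.integral_div, integral_exp_mul_complex hc]
    rw [show Complex.I * 2 * (k:ℂ) * Real.pi * ((1:ℝ):ℂ) = (k:ℂ) * (2*(Real.pi:ℂ)*Complex.I) by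
      push_cast; ring]
    simp [Complex.exp_int_mul_two_pi_mul_I]

/-- Pointwise factorization of the integrand. -/
lemma basisV_pointwise_aux (α : ℝ) (hα : 0 < α) (n m n' m' : ℤ) (θ r : ℝ) (hr : 0 ≤ r) :
    basisV α n m r θ * (starRingEnd ℂ) (basisV α n' m' r θ) * (r:ℂ)
      = (((α * r ^ (α-2) / (2*Real.pi) : ℝ):ℂ)
          * Complex.exp (Complex.I * 2 * ((n - n' : ℤ):ℂ) * Real.pi * ((r^α : ℝ):ℂ)) * (r:ℂ))
        * Complex.exp (Complex.I * ((m - m' : ℤ):ℂ) * (θ:ℂ)) := by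
  have hs : (0:ℝ) ≤ α * r ^ (α-2) / (2*Real.pi) := by positivity
  have hsq : ((Real.sqrt (α * r ^ (α-2) / (2*Real.pi)) : ℝ):ℂ)
      * ((Real.sqrt (α * r ^ (α-2) / (2*Real.pi)) : ℝ):ℂ)
      = ((α * r ^ (α-2) / (2*Real.pi) : ℝ):ℂ) := by
    rw [← Complex.ofReal_mul, Real.mul_self_sqrt hs]
  simp only [basisV, map_mul, Complex.conj_ofReal, ← Complex.exp_conj, map_intCast,
    Complex.conj_I, map_ofNat]
  rw [show Complex.I * 2 * ((n - n' : ℤ):ℂ) * Real.pi * ((r^α:ℝ):ℂ)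
      = Complex.I * 2 * n * Real.pi * ((r^α:ℝ):ℂ)
        + (-Complex.I) * 2 * n' * Real.pi * ((r^α:ℝ):ℂ) from by push_cast; ring,
    show Complex.I * ((m - m' : ℤ):ℂ) * (θ:ℂ)
      = Complex.I * m * θ + (-Complex.I) * m' * θ from by push_cast; ring,
    Complex.exp_add, Complex.exp_add, ← hsq]
  ring

/-- Orthonormality of the harmonic 2D basis functions on the unit disk with weight `r`. -/
theorem basisV_orthonormal (α : ℝ) (hα : 0 < α) (n m n' m' : ℤ) :
    ∫ θ in (0:ℝ)..(2 * Real.pi), ∫ r in (0:ℝ)..1,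
        basisV α n m r θ * (starRingEnd ℂ) (basisV α n' m' r θ) * (r : ℂ)
      = (if n = n' then 1 else 0) * (if m = m' then 1 else 0) := by
  have h1 : ∀ θ : ℝ,
      (∫ r in (0:ℝ)..1, basisV α n m r θ * (starRingEnd ℂ) (basisV α n' m' r θ) * (r:ℂ))
      = (((if n - n' = 0 then 1 else 0) / (2*Real.pi) : ℂ))
          * Complex.exp (Complex.I * ((m - m':ℤ):ℂ) * (θ:ℂ)) := by
    intro θ
    rw [intervalIntegral.integral_congr (g := fun r : ℝ =>
        (((α * r ^ (α-2) / (2*Real.pi) : ℝ):ℂ)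
          * Complex.exp (Complex.I * 2 * ((n - n' : ℤ):ℂ) * Real.pi * ((r^α : ℝ):ℂ)) * (r:ℂ))
        * Complex.exp (Complex.I * ((m - m' : ℤ):ℂ) * (θ:ℂ)))
      (fun r hr => by
        rw [Set.uIcc_of_le (by norm_num : (0:ℝ) ≤ 1)] at hr
        exact basisV_pointwise_aux α hα n m n' m' θ r hr.1),
      intervalIntegral.integral_mul_const, basisV_radial_aux α hα (n - n')]
  rw [intervalIntegral.integral_congr (fun θ _ => h1 θ),
    intervalIntegral.integral_const_mul, basisV_angular_aux (m - m')]
  have hπ : (2*Real.pi : ℂ) ≠ 0 := by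
    simp [Complex.ext_iff, Real.pi_ne_zero]
  simp only [sub_eq_zero]
  have hπ' : (Real.pi : ℂ) ≠ 0 := by simp [Complex.ext_iff, Real.pi_ne_zero]
  rcases eq_or_ne n n' with h | h <;> rcases eq_or_ne m m' with h' | h' <;>
    simp [h, h'] <;> field_simp <;> ring
end

section
/- Let f : ℝ² → ℝ have compact support and be integrable, and let p ≥ 0 be an integer. Then for every angle θ, the p-th radial moment of the Radon transform equals the corresponding directional moment of the image: ∫_ℝ r^p R_f(r,θ) dr = ∫∫_{ℝ²} f(x,y) (x cos θ + y sin θ)^p dx dy. -/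
open MeasureTheory Real

noncomputable def radonTransform (f : ℝ × ℝ → ℝ) (r θ : ℝ) : ℝ :=
  ∫ t : ℝ, f (r * Real.cos θ - t * Real.sin θ, r * Real.sin θ + t * Real.cos θ)

/-- Projection-moment theorem: radial moments of the Radon transform equal
directional moments of the image. -/
theorem radon_projection_moment (f : ℝ × ℝ → ℝ)
    (hf : Integrable f) (hsupp : HasCompactSupport f) (p : ℕ) (θ : ℝ) :
    ∫ r : ℝ, r ^ p * radonTransform f r θ
      = ∫ z : ℝ × ℝ, f z * (z.1 * Real.cos θ + z.2 * Real.sin θ) ^ p := by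
  classical
  set P : ℝ × ℝ → ℝ := fun z => (z.1 * Real.cos θ + z.2 * Real.sin θ) ^ p with hP
  have hPcont : Continuous P := by fun_prop
  -- the rotation linear map
  set L : (ℝ × ℝ) →ₗ[ℝ] (ℝ × ℝ) :=
    { toFun := fun w => (w.1 * Real.cos θ - w.2 * Real.sin θ,
        w.1 * Real.sin θ + w.2 * Real.cos θ)
      map_add' := by intro a b; simp [Prod.ext_iff]; constructor <;> ring
      map_smul' := by intro c a; simp [Prod.ext_iff, smul_eq_mul]; constructor <;> ring }
    with hLdef
  have hdet : LinearMap.det L = 1 := by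
    rw [← LinearMap.det_toMatrix (Module.Basis.finTwoProd ℝ), Matrix.det_fin_two]
    simp [LinearMap.toMatrix_apply, hLdef, Module.Basis.coe_finTwoProd_repr]
    ring_nf
    rw [add_comm]
    exact sin_sq_add_cos_sq θ
  have hLcont : Continuous L := L.continuous_of_finiteDimensional
  have hmap : Measure.map L (volume : Measure (ℝ × ℝ)) = volume := by
    rw [Measure.map_linearMap_addHaar_eq_smul_addHaar _ (by rw [hdet]; norm_num), hdet]
    simp
  have hMP : MeasurePreserving L (volume : Measure (ℝ × ℝ)) volume :=
    ⟨hLcont.measurable, hmap⟩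
  -- L as a continuous linear equiv (rotation is invertible)
  set Leq : (ℝ × ℝ) ≃ₗ[ℝ] (ℝ × ℝ) :=
    LinearEquiv.ofIsUnitDet (f := L) (v := Module.Basis.finTwoProd ℝ) (v' := Module.Basis.finTwoProd ℝ)
      (by rw [LinearMap.det_toMatrix, hdet]; exact isUnit_one) with hLeq
  have hLeqcoe : (Leq : (ℝ × ℝ) → (ℝ × ℝ)) = L := rfl
  have hemb : MeasurableEmbedding (L : (ℝ × ℝ) → (ℝ × ℝ)) := by
    have := (Leq.toContinuousLinearEquiv :
      (ℝ × ℝ) ≃L[ℝ] (ℝ × ℝ)).toHomeomorph.measurableEmbedding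
    simpa [hLeqcoe] using this
  -- integrability of z ↦ f z * P z
  set Q : ℝ × ℝ → ℝ := (tsupport f).indicator P with hQ
  obtain ⟨C, hC⟩ : ∃ C, ∀ x ∈ tsupport f, ‖P x‖ ≤ C :=
    hsupp.exists_bound_of_continuousOn hPcont.continuousOn
  have hQbdd : ∀ x, ‖Q x‖ ≤ max C 0 := by
    intro x
    by_cases hx : x ∈ tsupport f
    · simp only [hQ, Set.indicator_of_mem hx]
      exact (hC x hx).trans (le_max_left _ _)
    · simp [hQ, Set.indicator_of_notMem hx]
  have hQm : AEStronglyMeasurable Q volume :=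
    (hPcont.measurable.indicator (isClosed_tsupport f).measurableSet).aestronglyMeasurable
  have hg : Integrable (fun z => f z * P z) := by
    have h1 : Integrable (fun z => Q z * f z) :=
      hf.bdd_mul hQm (Filter.Eventually.of_forall hQbdd)
    have h2 : (fun z => Q z * f z) = fun z => f z * P z := by
      funext z
      by_cases hz : z ∈ tsupport f
      · simp [hQ, Set.indicator_of_mem hz, mul_comm]
      · have hfz : f z = 0 := image_eq_zero_of_notMem_tsupport hz
        simp [hQ, Set.indicator_of_notMem hz, hfz]
    rwa [h2] at h1
  -- change of variables via rotation
  have key : ∫ z : ℝ × ℝ, f z * P z = ∫ w : ℝ × ℝ, f (L w) * P (L w) :=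
    (hMP.integral_comp hemb _).symm
  have hPL : ∀ w : ℝ × ℝ, P (L w) = w.1 ^ p := by
    intro w
    simp only [hP, hLdef, LinearMap.coe_mk, AddHom.coe_mk]
    congr 1
    linear_combination w.1 * sin_sq_add_cos_sq θ
  have hint2 : Integrable (fun w : ℝ × ℝ => f (L w) * P (L w)) :=
    (hMP.integrable_comp_emb hemb).mpr hg
  have hint3 : Integrable (fun w : ℝ × ℝ => f (L w) * P (L w))
      ((volume : Measure ℝ).prod volume) := by
    rwa [← Measure.volume_eq_prod]
  rw [key]
  symm
  calc ∫ w : ℝ × ℝ, f (L w) * P (L w)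
      = ∫ w : ℝ × ℝ, f (L w) * P (L w) ∂((volume : Measure ℝ).prod volume) := by
        rw [← Measure.volume_eq_prod]
    _ = ∫ r : ℝ, ∫ t : ℝ, f (L (r, t)) * P (L (r, t)) := integral_prod _ hint3
    _ = ∫ r : ℝ, r ^ p * radonTransform f r θ := by
        refine integral_congr_ae (Filter.Eventually.of_forall fun r => ?_)
        simp only [hPL, radonTransform]
        rw [integral_mul_const, mul_comm]
        congr 1
end
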